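/- Let K₁, …, Kₙ be Markov kernels on X such that there exist ε ∈ (0,1] and probability measures ν₁, …, νₙ on X with Kᵢ(x, A) ≥ ε νᵢ(A) for every i, every x ∈ X and every measurable A. Then for any two probability measures λ₁, λ₂ on X, ‖λ₁K₁⋯Kₙ − λ₂K₁⋯Kₙ‖_TV ≤ (1 − ε)ⁿ. (This is the abstract form of Corollary 1: an inhomogeneous Markov chain whose transition kernels admit a common minorization constant ε forgets its initial distribution geometrically at rate 1 − ε.) -/

import Mathlib

open MeasureTheory ProbabilityTheory ENNReal

/-- Total variation distance between two measures:
`‖μ − ν‖_TV = sup_{A measurable} |μ(A) − ν(A)|`. -/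
noncomputable def tvDist {X : Type*} [MeasurableSpace X] (μ ν : Measure X) : ℝ :=
  ⨆ A : {A : Set X // MeasurableSet A}, |(μ A.1).toReal - (ν A.1).toReal|

/-- The law of the chain after `n` steps, started from `lam`, with transition
kernel `K i` used at step `i+1` (i.e. the kernels used are `K 0, …, K (n-1)`,
playing the role of `K₁, …, Kₙ`). -/
noncomputable def chainMeasure {X : Type*} [MeasurableSpace X]
    (K : ℕ → Kernel X X) (lam : Measure X) : ℕ → Measure X
  | 0 => lam
  | n + 1 => (chainMeasure K lam n).bind (fun x => K n x)

lemma chainMeasure_isProb {X : Type*} [MeasurableSpace X]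
    (K : ℕ → Kernel X X) [∀ i, IsMarkovKernel (K i)]
    (lam : Measure X) [IsProbabilityMeasure lam] (n : ℕ) :
    IsProbabilityMeasure (chainMeasure K lam n) := by
  induction n with
  | zero => simpa [chainMeasure] using ‹IsProbabilityMeasure lam›
  | succ m ih =>
    constructor
    rw [chainMeasure, Measure.bind_apply MeasurableSet.univ (K m).measurable.aemeasurable]
    simp

/-- One-step contraction under Doeblin minorization. -/
lemma doeblin_step {X : Type*} [MeasurableSpace X]
    (K : Kernel X X) [IsMarkovKernel K]
    (e : ℝ≥0∞) (he : e ≠ ⊤) (ρ : Measure X) [IsProbabilityMeasure ρ]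
    (hmin : ∀ x : X, ∀ A : Set X, MeasurableSet A → e * ρ A ≤ K x A)
    (μ ν : Measure X) [IsProbabilityMeasure μ] [IsProbabilityMeasure ν]
    (δ : ℝ≥0∞) (hδ : ∀ B : Set X, MeasurableSet B → μ B ≤ ν B + δ)
    (A : Set X) (hA : MeasurableSet A) :
    (μ.bind (fun x => K x)) A ≤ (ν.bind (fun x => K x)) A + (1 - e) * δ := by
  obtain ⟨s, hs, hsle, hsge⟩ := hahn_decomposition (μ := μ) (ν := ν)
  set g : X → ℝ≥0∞ := fun x => K x A - e * ρ A with hg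
  have hgmeas : Measurable g := (Kernel.measurable_coe K hA).sub measurable_const
  have hgadd : ∀ x, g x + e * ρ A = K x A := fun x => tsub_add_cancel_of_le (hmin x A hA)
  have hgle : ∀ x, g x ≤ 1 - e := by
    intro x
    have hρ : e * ρ A + e * ρ Aᶜ = e := by
      rw [← mul_add, measure_add_measure_compl hA, measure_univ, mul_one]
    have h1 : g x + e ≤ 1 := by
      calc g x + e = g x + e * ρ A + e * ρ Aᶜ := by rw [add_assoc, hρ]
        _ = K x A + e * ρ Aᶜ := by rw [hgadd]
        _ ≤ K x A + K x Aᶜ := add_le_add le_rfl (hmin x Aᶜ hA.compl)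
        _ = 1 := by rw [measure_add_measure_compl hA, measure_univ]
    exact ENNReal.le_sub_of_add_le_right he h1
  -- the key integral inequality
  have hres : ν.restrict s ≤ μ.restrict s := by
    rw [Measure.le_iff]
    intro t ht
    rw [Measure.restrict_apply ht, Measure.restrict_apply ht]
    exact hsle _ (ht.inter hs) Set.inter_subset_right
  set τ : Measure X := μ.restrict s - ν.restrict s with hτdef
  have hτ : τ + ν.restrict s = μ.restrict s := Measure.sub_add_cancel_of_le hres
  have hτuniv : τ Set.univ ≤ δ := by
    have h1 : τ Set.univ = μ s - ν s := by
      rw [hτdef, Measure.sub_apply MeasurableSet.univ hres,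
        Measure.restrict_apply_univ, Measure.restrict_apply_univ]
    rw [h1]
    exact tsub_le_iff_left.mpr (hδ s hs)
  have hcompl : μ.restrict sᶜ ≤ ν.restrict sᶜ := by
    rw [Measure.le_iff]
    intro t ht
    rw [Measure.restrict_apply ht, Measure.restrict_apply ht]
    exact hsge _ (ht.inter hs.compl) Set.inter_subset_right
  have key : ∫⁻ x, g x ∂μ ≤ ∫⁻ x, g x ∂ν + (1 - e) * δ := by
    calc ∫⁻ x, g x ∂μ = ∫⁻ x in s, g x ∂μ + ∫⁻ x in sᶜ, g x ∂μ :=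
          (lintegral_add_compl _ hs).symm
      _ = ∫⁻ x, g x ∂(τ + ν.restrict s) + ∫⁻ x in sᶜ, g x ∂μ := by rw [hτ]
      _ = ∫⁻ x, g x ∂τ + ∫⁻ x in s, g x ∂ν + ∫⁻ x in sᶜ, g x ∂μ := by
          rw [lintegral_add_measure]
      _ ≤ (1 - e) * δ + ∫⁻ x in s, g x ∂ν + ∫⁻ x in sᶜ, g x ∂ν := by
          gcongr
          · calc ∫⁻ x, g x ∂τ ≤ ∫⁻ _, (1 - e) ∂τ := lintegral_mono hgle
              _ = (1 - e) * τ Set.univ := lintegral_const _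
              _ ≤ (1 - e) * δ := by gcongr
      _ = (1 - e) * δ + (∫⁻ x in s, g x ∂ν + ∫⁻ x in sᶜ, g x ∂ν) := by ring
      _ = ∫⁻ x, g x ∂ν + (1 - e) * δ := by rw [lintegral_add_compl _ hs, add_comm]
  have hint : ∀ (m : Measure X) [IsProbabilityMeasure m],
      (m.bind (fun x => K x)) A = ∫⁻ x, g x ∂m + e * ρ A := by
    intro m _
    rw [Measure.bind_apply hA K.measurable.aemeasurable]
    calc ∫⁻ x, K x A ∂m = ∫⁻ x, (g x + e * ρ A) ∂m := by
          refine lintegral_congr fun x => (hgadd x).symm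
      _ = ∫⁻ x, g x ∂m + (e * ρ A) * m Set.univ := by
          rw [lintegral_add_right _ measurable_const, lintegral_const]
      _ = ∫⁻ x, g x ∂m + e * ρ A := by rw [measure_univ, mul_one]
  rw [hint μ, hint ν]
  calc ∫⁻ x, g x ∂μ + e * ρ A ≤ (∫⁻ x, g x ∂ν + (1 - e) * δ) + e * ρ A :=
        add_le_add_left key _
    _ = ∫⁻ x, g x ∂ν + e * ρ A + (1 - e) * δ := by ring

/-- abstract form of Corollary 1. If the Markov kernels
`K₁, …, Kₙ` all admit a Doeblin minorization `Kᵢ(x, A) ≥ ε νᵢ(A)` with a common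
constant `ε ∈ (0,1]`, then for any two initial probability measures `λ₁, λ₂`,
`‖λ₁K₁⋯Kₙ − λ₂K₁⋯Kₙ‖_TV ≤ (1 − ε)ⁿ`. -/
theorem tv_forgetting_of_minorized_chain
    {X : Type*} [MeasurableSpace X]
    (n : ℕ) (K : ℕ → Kernel X X) [∀ i, IsMarkovKernel (K i)]
    (ε : ℝ) (hε0 : 0 < ε) (hε1 : ε ≤ 1)
    (ν : ℕ → Measure X) (hν : ∀ i, IsProbabilityMeasure (ν i))
    (hmin : ∀ i < n, ∀ x : X, ∀ A : Set X, MeasurableSet A →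
      ENNReal.ofReal ε * ν i A ≤ K i x A)
    (lam₁ lam₂ : Measure X) [IsProbabilityMeasure lam₁] [IsProbabilityMeasure lam₂] :
    tvDist (chainMeasure K lam₁ n) (chainMeasure K lam₂ n) ≤ (1 - ε) ^ n := by
  set e : ℝ≥0∞ := ENNReal.ofReal ε with he
  set d : ℝ≥0∞ := 1 - e with hd
  have main : ∀ m, m ≤ n → ∀ A : Set X, MeasurableSet A →
      chainMeasure K lam₁ m A ≤ chainMeasure K lam₂ m A + d ^ m ∧
      chainMeasure K lam₂ m A ≤ chainMeasure K lam₁ m A + d ^ m := by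
    intro m
    induction m with
    | zero =>
      intro _ A hA
      simp only [chainMeasure, pow_zero]
      constructor
      · exact le_trans prob_le_one le_add_self
      · exact le_trans prob_le_one le_add_self
    | succ m ih =>
      intro hm A hA
      have hm' : m ≤ n := le_of_lt (Nat.lt_of_succ_le hm)
      have hmn : m < n := Nat.lt_of_succ_le hm
      haveI := chainMeasure_isProb K lam₁ m
      haveI := chainMeasure_isProb K lam₂ m
      haveI := hν m
      have h1 := doeblin_step (K m) e ENNReal.ofReal_ne_top (ν m) (hmin m hmn)
        (chainMeasure K lam₁ m) (chainMeasure K lam₂ m) (d ^ m)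
        (fun B hB => (ih hm' B hB).1) A hA
      have h2 := doeblin_step (K m) e ENNReal.ofReal_ne_top (ν m) (hmin m hmn)
        (chainMeasure K lam₂ m) (chainMeasure K lam₁ m) (d ^ m)
        (fun B hB => (ih hm' B hB).2) A hA
      have hpow : (1 - e) * d ^ m = d ^ (m + 1) := by
        rw [hd, pow_succ, mul_comm]
      rw [hpow] at h1 h2
      exact ⟨h1, h2⟩
  -- convert to real bound
  have hεnn : (0:ℝ) ≤ 1 - ε := by linarith
  have hD : d ^ n = ENNReal.ofReal ((1 - ε) ^ n) := by
    rw [ENNReal.ofReal_pow hεnn]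
    congr 1
    rw [hd, he, ENNReal.ofReal_sub _ hε0.le, ENNReal.ofReal_one]
  haveI : Nonempty {A : Set X // MeasurableSet A} := ⟨⟨∅, MeasurableSet.empty⟩⟩
  haveI := chainMeasure_isProb K lam₁ n
  haveI := chainMeasure_isProb K lam₂ n
  apply ciSup_le
  rintro ⟨A, hA⟩
  obtain ⟨h1, h2⟩ := main n le_rfl A hA
  have hfin1 : chainMeasure K lam₁ n A ≠ ⊤ := measure_ne_top _ _
  have hfin2 : chainMeasure K lam₂ n A ≠ ⊤ := measure_ne_top _ _
  have hDfin : d ^ n ≠ ⊤ := by rw [hD]; exact ENNReal.ofReal_ne_top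
  rw [abs_sub_le_iff]
  have conv : ∀ (a b : ℝ≥0∞), a ≠ ⊤ → b ≠ ⊤ → a ≤ b + d ^ n →
      a.toReal - b.toReal ≤ (1 - ε) ^ n := by
    intro a b ha hb hab
    have : a.toReal ≤ (b + d ^ n).toReal :=
      ENNReal.toReal_mono (ENNReal.add_ne_top.mpr ⟨hb, hDfin⟩) hab
    rw [ENNReal.toReal_add hb hDfin, hD, ENNReal.toReal_ofReal (pow_nonneg hεnn n)] at this
    linarith
  exact ⟨conv _ _ hfin1 hfin2 h1, conv _ _ hfin2 hfin1 h2⟩
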